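/- Let q = 2^t, let K ⊆ F_q be a subfield with |K| = n, and let β_A, β_B, β_C ∈ F_q satisfy Δ_B := β_B − β_A ∈ K and Δ_C := β_C − β_A ∈ K. Suppose Γ : K → F_q satisfies f(β_A) + Σ_{x ∈ K} Γ(x) f(x) = 0 for every polynomial f ∈ F_q[X] with deg f < n. Then for every m with 3(m − 1) < n and all polynomials p, r, s ∈ F_q[X] of degree < m, Σ_{x ∈ K} Γ(x) · p(x) · r(x + Δ_B) · s(x + Δ_C) = p(β_A) · r(β_B) · s(β_C). -/

import Mathlib

/-- Let `q = 2^t`, `K ⊆ F_q` a subfield of order `n`, and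
`β_A, β_B, β_C ∈ F_q` with `β_B - β_A ∈ K` and `β_C - β_A ∈ K`. Suppose
`Γ : K → F_q` satisfies `f(β_A) + ∑_{x ∈ K} Γ(x) f(x) = 0` for every polynomial
`f` of degree `< n`. Then for every `m` with `3(m-1) < n` and all polynomials
`p, r, s` of degree `< m`,
`∑_{x ∈ K} Γ(x) p(x) r(x + Δ_B) s(x + Δ_C) = p(β_A) r(β_B) s(β_C)`
where `Δ_B = β_B - β_A` and `Δ_C = β_C - β_A`. -/
theorem stmt3 (F : Type*) [Field F] [Fintype F] (t : ℕ)
    (hq : Fintype.card F = 2 ^ t)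
    (K : Subfield F) [Fintype K] (n : ℕ) (hn : Fintype.card K = n)
    (βA βB βC : F) (hB : βB - βA ∈ K) (hC : βC - βA ∈ K)
    (Γ : K → F)
    (hΓ : ∀ f : Polynomial F, f.degree < ((n : ℕ) : WithBot ℕ) →
      f.eval βA + ∑ x : K, Γ x * f.eval (x : F) = 0)
    (m : ℕ) (hm : 3 * (m - 1) < n)
    (p r s : Polynomial F)
    (hp : p.degree < ((m : ℕ) : WithBot ℕ))
    (hr : r.degree < ((m : ℕ) : WithBot ℕ))
    (hs : s.degree < ((m : ℕ) : WithBot ℕ)) :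
    ∑ x : K, Γ x * p.eval (x : F) * r.eval ((x : F) + (βB - βA))
        * s.eval ((x : F) + (βC - βA))
      = p.eval βA * r.eval βB * s.eval βC := by
  have hc2 : ringChar F = 2 := by
    have h1 : ringChar F ∣ 2 ^ t := by
      rw [← hq]
      exact (CharP.cast_eq_zero_iff F (ringChar F) _).mp
        (FiniteField.cast_card_eq_zero (K:=F))
    exact (Nat.prime_dvd_prime_iff_eq (CharP.char_is_prime F _) Nat.prime_two).mp
      ((CharP.char_is_prime F _).dvd_of_dvd_pow h1)
  haveI : CharP F 2 := hc2 ▸ ringChar.charP F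
  set f : Polynomial F :=
    p * (r.comp (Polynomial.X + Polynomial.C (βB - βA)))
      * (s.comp (Polynomial.X + Polynomial.C (βC - βA))) with hf
  have heval : ∀ y : F, f.eval y = p.eval y * r.eval (y + (βB - βA)) * s.eval (y + (βC - βA)) := by
    intro y; simp [hf, Polynomial.eval_comp]
  have hdeg : f.degree < ((n : ℕ) : WithBot ℕ) := by
    by_cases hp0 : p = 0
    · simp [hf, hp0]
    by_cases hr0 : r = 0
    · simp [hf, hr0]
    by_cases hs0 : s = 0
    · simp [hf, hs0]
    have hm0 : 0 < m := by
      by_contra h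
      push_neg at h
      interval_cases m
      simp [Polynomial.degree_eq_bot] at hp
      exact hp0 (by exact_mod_cast hp)
    have hpd : p.natDegree ≤ m - 1 := by
      have := (Polynomial.natDegree_lt_iff_degree_lt hp0).mpr (by exact_mod_cast hp)
      omega
    have hrd : r.natDegree ≤ m - 1 := by
      have := (Polynomial.natDegree_lt_iff_degree_lt hr0).mpr (by exact_mod_cast hr)
      omega
    have hsd : s.natDegree ≤ m - 1 := by
      have := (Polynomial.natDegree_lt_iff_degree_lt hs0).mpr (by exact_mod_cast hs)
      omega
    have hnd : f.natDegree ≤ 3 * (m - 1) := by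
      calc f.natDegree ≤ (p * r.comp (Polynomial.X + Polynomial.C (βB - βA))).natDegree
            + (s.comp (Polynomial.X + Polynomial.C (βC - βA))).natDegree :=
              Polynomial.natDegree_mul_le
        _ ≤ p.natDegree + (r.comp (Polynomial.X + Polynomial.C (βB - βA))).natDegree
            + (s.comp (Polynomial.X + Polynomial.C (βC - βA))).natDegree := by
              gcongr; exact Polynomial.natDegree_mul_le
        _ ≤ 3 * (m - 1) := by
            simp only [Polynomial.natDegree_comp, Polynomial.natDegree_X_add_C, mul_one]
            omega
    calc f.degree ≤ (f.natDegree : WithBot ℕ) := Polynomial.degree_le_natDegree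
      _ < ((n : ℕ) : WithBot ℕ) := by exact_mod_cast lt_of_le_of_lt hnd hm
  have h := hΓ f hdeg
  have hsum : ∑ x : K, Γ x * f.eval (x : F)
      = ∑ x : K, Γ x * p.eval (x : F) * r.eval ((x : F) + (βB - βA))
        * s.eval ((x : F) + (βC - βA)) := by
    apply Finset.sum_congr rfl; intro x _; rw [heval]; ring
  rw [hsum, heval] at h
  have hAB : βA + (βB - βA) = βB := by ring
  have hAC : βA + (βC - βA) = βC := by ring
  rw [hAB, hAC] at h
  rw [eq_neg_of_add_eq_zero_right h]
  exact CharTwo.neg_eq _
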